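/- (Full swap regret for Lipschitz losses.) For every d ≥ 1 there is a constant C_d such that for every convex set K ⊆ ℝ^d of diameter at most 1, every L > 0, and every horizon T ≥ 1, there exists a strategy — a family of maps taking the previously observed losses ℓ_1,…,ℓ_{t−1} to a finitely supported probability distribution x_t on K — such that for every sequence of L-Lipschitz loss functions ℓ_1,…,ℓ_T : K → ℝ, FullSwapReg(x_{1:T}, ℓ_{1:T}) ≤ C_d · L · T^{(d+1)/(d+2)} · log(T+1). -/

import Mathlib

lemma exists_stationary {n : ℕ} (hn : 0 < n) (q : Fin n → Fin n → ℝ)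
    (hq0 : ∀ i j, 0 ≤ q i j) (hq1 : ∀ i, ∑ j, q i j = 1) :
    ∃ p ∈ stdSimplex ℝ (Fin n), ∀ j, ∑ i, p i * q i j = p j := by
  classical
  set f : (Fin n → ℝ) → (Fin n → ℝ) := fun p j => ∑ i, p i * q i j with hf
  have hfmem : ∀ p ∈ stdSimplex ℝ (Fin n), f p ∈ stdSimplex ℝ (Fin n) := by
    rintro p ⟨hp0, hp1⟩
    constructor
    · intro j; exact Finset.sum_nonneg fun i _ => mul_nonneg (hp0 i) (hq0 i j)
    · rw [Finset.sum_comm]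
      simp only [← Finset.mul_sum]
      simp [hq1, hp1]
  have hp0mem : (fun _ : Fin n => (n : ℝ)⁻¹) ∈ stdSimplex ℝ (Fin n) := by
    constructor
    · intro _; positivity
    · simp [Finset.card_fin]
      field_simp
  set x : ℕ → (Fin n → ℝ) := fun k => f^[k] (fun _ => (n : ℝ)⁻¹) with hx
  have hxsucc : ∀ k, x (k+1) = f (x k) := fun k => Function.iterate_succ_apply' f k _
  have hxmem : ∀ k, x k ∈ stdSimplex ℝ (Fin n) := by
    intro k; induction k with
    | zero => exact hp0mem
    | succ k ih => rw [hxsucc]; exact hfmem _ ih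
  set a : ℕ → (Fin n → ℝ) := fun m j => (∑ k ∈ Finset.range (m+1), x k j) / ((m : ℝ)+1)
    with ha
  have hamem : ∀ m, a m ∈ stdSimplex ℝ (Fin n) := by
    intro m
    constructor
    · intro j
      apply div_nonneg _ (by positivity)
      exact Finset.sum_nonneg fun k _ => (hxmem k).1 j
    · simp only [ha]
      rw [← Finset.sum_div, Finset.sum_comm]
      have : ∀ k ∈ Finset.range (m+1), ∑ j, x k j = 1 := fun k _ => (hxmem k).2
      rw [Finset.sum_congr rfl this]
      simp
      field_simp
      exact Nat.cast_add_one_ne_zero m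
  have hfa : ∀ m j, f (a m) j = a m j + (x (m+1) j - x 0 j) / ((m : ℝ)+1) := by
    intro m j
    have lhs : f (a m) j = ∑ i, ∑ k ∈ Finset.range (m+1), x k i * q i j / ((m:ℝ)+1) := by
      simp only [hf, ha]
      refine Finset.sum_congr rfl fun i _ => ?_
      rw [div_mul_eq_mul_div, Finset.sum_mul, Finset.sum_div]
    have rhs : ∀ k, x (k+1) j = ∑ i, x k i * q i j := by
      intro k; rw [hxsucc]
    have : f (a m) j = (∑ k ∈ Finset.range (m+1), x (k+1) j) / ((m:ℝ)+1) := by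
      rw [lhs, Finset.sum_comm, Finset.sum_div]
      refine Finset.sum_congr rfl fun k _ => ?_
      rw [rhs, Finset.sum_div]
    rw [this]
    have h1 : (∑ k ∈ Finset.range (m+1), x (k+1) j)
        = (∑ k ∈ Finset.range (m+1), x k j) + x (m+1) j - x 0 j := by
      rw [Finset.sum_range_succ (fun k => x (k+1) j) m,
        Finset.sum_range_succ' (fun k => x k j) m]
      ring
    rw [h1]; simp only [ha]; ring
  obtain ⟨p, hpmem, σ, hσ, hconv⟩ := (isCompact_stdSimplex ℝ (Fin n)).tendsto_subseq hamem
  refine ⟨p, hpmem, ?_⟩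
  have hcont : Continuous f := by
    apply continuous_pi
    intro j
    exact continuous_finset_sum _ fun i _ => (continuous_apply i).mul continuous_const
  have hconv' : Filter.Tendsto (fun m => f (a (σ m))) Filter.atTop (nhds (f p)) :=
    (hcont.tendsto p).comp hconv
  intro j
  have h1 : Filter.Tendsto (fun m => f (a (σ m)) j) Filter.atTop (nhds (f p j)) :=
    (tendsto_pi_nhds.1 hconv') j
  have h2 : Filter.Tendsto (fun m => a (σ m) j) Filter.atTop (nhds (p j)) :=
    (tendsto_pi_nhds.1 hconv) j
  have h3 : Filter.Tendsto (fun m => f (a (σ m)) j - a (σ m) j) Filter.atTop (nhds 0) := by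
    have hb : ∀ m : ℕ, |f (a (σ m)) j - a (σ m) j| ≤ 2 / ((m : ℝ)+1) := by
      intro m
      rw [hfa, add_sub_cancel_left]
      have hσm : (m : ℝ) + 1 ≤ (σ m : ℝ) + 1 := by
        have h := hσ.id_le m
        have : (m:ℝ) ≤ σ m := by exact_mod_cast h
        linarith
      have hbound : |x (σ m + 1) j - x 0 j| ≤ 2 := by
        have h1' := (hxmem (σ m + 1)).1 j
        have h2' := (hxmem 0).1 j
        have h3' : x (σ m + 1) j ≤ 1 := by
          calc x (σ m + 1) j ≤ ∑ i, x (σ m + 1) i :=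
            Finset.single_le_sum (fun i _ => (hxmem (σ m +1)).1 i) (Finset.mem_univ j)
          _ = 1 := (hxmem (σ m + 1)).2
        have h4' : x 0 j ≤ 1 := by
          calc x 0 j ≤ ∑ i, x 0 i :=
            Finset.single_le_sum (fun i _ => (hxmem 0).1 i) (Finset.mem_univ j)
          _ = 1 := (hxmem 0).2
        rw [abs_le]; constructor <;> linarith
      rw [abs_div, abs_of_pos (by positivity : (0:ℝ) < (σ m : ℝ) + 1)]
      exact div_le_div₀ (by norm_num) hbound (by positivity) hσm
    have htend : Filter.Tendsto (fun m : ℕ => 2 / ((m : ℝ)+1)) Filter.atTop (nhds 0) := by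
      apply Filter.Tendsto.div_atTop (tendsto_const_nhds)
      exact Filter.tendsto_atTop_add_const_right _ _ tendsto_natCast_atTop_atTop
    exact squeeze_zero_norm hb htend
  have h4 : Filter.Tendsto (fun m => f (a (σ m)) j - a (σ m) j) Filter.atTop
      (nhds (f p j - p j)) := h1.sub h2
  have h5 := tendsto_nhds_unique h4 h3
  have hfp : f p j = p j := by linarith [sub_eq_zero.1 h5]
  exact hfp

lemma exp_neg_le {y : ℝ} (hy : 0 ≤ y) : Real.exp (-y) ≤ 1 - y + y^2 := by
  have h1 : 0 < 1 + y := by linarith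
  have h2 : Real.exp (-y) ≤ 1 / (1 + y) := by
    rw [le_div_iff₀ h1]
    have := Real.add_one_le_exp y
    calc Real.exp (-y) * (1 + y) ≤ Real.exp (-y) * Real.exp y := by
          apply mul_le_mul_of_nonneg_left _ (Real.exp_pos _).le
          linarith
    _ = 1 := by rw [← Real.exp_add]; simp
  refine h2.trans ?_
  rw [div_le_iff₀ h1]
  nlinarith
lemma hedge_bound {Φ : Type*} [Fintype Φ] [Nonempty Φ] {η : ℝ} (hη : 0 < η)
    (c : ℕ → Φ → ℝ) (T : ℕ) (hc : ∀ t < T, ∀ φ, 0 ≤ c t φ ∧ c t φ ≤ 1) (ψ : Φ) :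
    ∑ t ∈ Finset.range T, (∑ φ, (Real.exp (-η * ∑ u ∈ Finset.range t, c u φ) /
        ∑ φ', Real.exp (-η * ∑ u ∈ Finset.range t, c u φ')) * c t φ)
      ≤ (∑ t ∈ Finset.range T, c t ψ) + η * T + Real.log (Fintype.card Φ) / η := by
  classical
  set Z : ℕ → ℝ := fun t => ∑ φ', Real.exp (-η * ∑ u ∈ Finset.range t, c u φ') with hZ
  set A : ℕ → ℝ := fun t => ∑ φ, (Real.exp (-η * ∑ u ∈ Finset.range t, c u φ) / Z t) * c t φ
    with hA
  have hZpos : ∀ t, 0 < Z t :=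
    fun t => Finset.sum_pos (fun φ _ => Real.exp_pos _) Finset.univ_nonempty
  have step : ∀ t < T, Z (t+1) ≤ Z t * Real.exp (-η * A t + η^2) := by
    intro t ht
    have h1 : Z (t+1) = ∑ φ', Real.exp (-η * ∑ u ∈ Finset.range t, c u φ')
        * Real.exp (-η * c t φ') := by
      refine Finset.sum_congr rfl fun φ _ => ?_
      rw [← Real.exp_add, Finset.sum_range_succ]
      ring_nf
    have h2 : Z (t+1) ≤ ∑ φ', Real.exp (-η * ∑ u ∈ Finset.range t, c u φ')
        * (1 - η * c t φ' + η^2) := by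
      rw [h1]
      refine Finset.sum_le_sum fun φ _ => ?_
      apply mul_le_mul_of_nonneg_left _ (Real.exp_pos _).le
      have hy : 0 ≤ η * c t φ := mul_nonneg hη.le (hc t ht φ).1
      have h5 : Real.exp (-η * c t φ) ≤ 1 - η * c t φ + (η * c t φ)^2 := by
        rw [neg_mul]; exact exp_neg_le hy
      refine h5.trans ?_
      have h3 := (hc t ht φ).1; have h4 := (hc t ht φ).2
      have hc2 : (c t φ)^2 ≤ 1 := by nlinarith
      have h6 : (η * c t φ)^2 ≤ η^2 := by
        calc (η * c t φ)^2 = η^2 * (c t φ)^2 := by ring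
          _ ≤ η^2 * 1 := mul_le_mul_of_nonneg_left hc2 (sq_nonneg η)
          _ = η^2 := mul_one _
      linarith
    have h3 : ∑ φ', Real.exp (-η * ∑ u ∈ Finset.range t, c u φ') * (1 - η * c t φ' + η^2)
        = Z t * (1 - η * A t + η^2) := by
      have hAZ : Z t * A t = ∑ φ, Real.exp (-η * ∑ u ∈ Finset.range t, c u φ) * c t φ := by
        rw [hA, Finset.mul_sum]
        refine Finset.sum_congr rfl fun φ _ => ?_
        field_simp
        exact mul_div_cancel_left₀ _ (hZpos t).ne'
      have expand : ∑ φ', Real.exp (-η * ∑ u ∈ Finset.range t, c u φ') * (1 - η * c t φ' + η^2)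
          = (∑ φ', Real.exp (-η * ∑ u ∈ Finset.range t, c u φ')) * (1 + η^2)
            - η * ∑ φ', Real.exp (-η * ∑ u ∈ Finset.range t, c u φ') * c t φ' := by
        rw [Finset.sum_mul, Finset.mul_sum, ← Finset.sum_sub_distrib]
        exact Finset.sum_congr rfl fun φ _ => by ring
      rw [expand, ← hAZ]
      have hZt : (∑ φ', Real.exp (-η * ∑ u ∈ Finset.range t, c u φ')) = Z t := rfl
      rw [hZt]; ring
    refine h2.trans (h3.le.trans ?_)
    apply mul_le_mul_of_nonneg_left _ (hZpos t).le
    have := Real.add_one_le_exp (-η * A t + η^2)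
    linarith
  have iter : ∀ m, m ≤ T → Z m ≤ Z 0 * Real.exp (∑ t ∈ Finset.range m, (-η * A t + η^2)) := by
    intro m
    induction m with
    | zero => intro _; simp
    | succ m ih =>
      intro hm
      have h1 := step m (by omega)
      have h2 := ih (by omega)
      calc Z (m+1) ≤ Z m * Real.exp (-η * A m + η^2) := h1
        _ ≤ (Z 0 * Real.exp (∑ t ∈ Finset.range m, (-η * A t + η^2)))
            * Real.exp (-η * A m + η^2) := by
            apply mul_le_mul_of_nonneg_right h2 (Real.exp_pos _).le
        _ = Z 0 * Real.exp (∑ t ∈ Finset.range (m+1), (-η * A t + η^2)) := by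
            rw [Finset.sum_range_succ,
              Real.exp_add (∑ t ∈ Finset.range m, (-η * A t + η ^ 2)) (-η * A m + η ^ 2),
              mul_assoc]
  have hZ0 : Z 0 = Fintype.card Φ := by simp [hZ]
  have hfinal : Real.exp (-η * ∑ u ∈ Finset.range T, c u ψ) ≤ Z T :=
    Finset.single_le_sum (f := fun φ => Real.exp (-η * ∑ u ∈ Finset.range T, c u φ))
      (fun φ _ => (Real.exp_pos _).le) (Finset.mem_univ ψ)
  have hlog : -η * ∑ u ∈ Finset.range T, c u ψ
      ≤ Real.log (Fintype.card Φ) + ∑ t ∈ Finset.range T, (-η * A t + η^2) := by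
    have h1 : Real.exp (-η * ∑ u ∈ Finset.range T, c u ψ)
        ≤ (Fintype.card Φ : ℝ) * Real.exp (∑ t ∈ Finset.range T, (-η * A t + η^2)) := by
      rw [← hZ0]; exact hfinal.trans (iter T le_rfl)
    have hcard : (0:ℝ) < Fintype.card Φ := by
      exact_mod_cast Fintype.card_pos
    have := Real.log_le_log (Real.exp_pos _) h1
    rw [Real.log_exp, Real.log_mul (ne_of_gt hcard) (Real.exp_ne_zero _), Real.log_exp] at this
    exact this
  have hsum : ∑ t ∈ Finset.range T, (-η * A t + η^2)
      = -η * ∑ t ∈ Finset.range T, A t + η^2 * T := by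
    rw [Finset.sum_add_distrib, ← Finset.mul_sum]
    simp [Finset.sum_const, Finset.card_range]
    ring
  rw [hsum] at hlog
  have hdiv : ∑ t ∈ Finset.range T, A t - ∑ t ∈ Finset.range T, c t ψ - η * T
      ≤ Real.log (Fintype.card Φ) / η := by
    rw [le_div_iff₀ hη]
    nlinarith [hlog]
  linarith

noncomputable def qmat {n : ℕ} (w : (Fin n → Fin n) → ℝ) (i j : Fin n) : ℝ :=
  ∑ φ, w φ * (if φ i = j then 1 else 0)

open scoped Classical in
noncomputable def fixpt (n : ℕ) (w : (Fin n → Fin n) → ℝ) : Fin n → ℝ :=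
  if h : ∃ p, p ∈ stdSimplex ℝ (Fin n) ∧ ∀ j, ∑ i, p i * qmat w i j = p j then h.choose
  else fun _ => (n : ℝ)⁻¹

lemma fixpt_mem {n : ℕ} (hn : 0 < n) (w : (Fin n → Fin n) → ℝ) :
    fixpt n w ∈ stdSimplex ℝ (Fin n) := by
  classical
  unfold fixpt
  split
  · next h => exact h.choose_spec.1
  · constructor
    · intro _; positivity
    · simp [Finset.card_fin]
      field_simp

noncomputable def strat (n : ℕ) (η : ℝ) : ℕ → (ℕ → Fin n → ℝ) → (Fin n → ℝ)
  | t, g => fixpt n (fun φ =>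
      Real.exp (-η * ∑ u : Fin t, ∑ i, strat n η u.1 g i * g u.1 (φ i)) /
      ∑ φ' : Fin n → Fin n,
        Real.exp (-η * ∑ u : Fin t, ∑ i, strat n η u.1 g i * g u.1 (φ' i)))
  termination_by t => t
  decreasing_by all_goals exact u.2

lemma strat_mem {n : ℕ} (hn : 0 < n) (η : ℝ) (t : ℕ) (g : ℕ → Fin n → ℝ) :
    strat n η t g ∈ stdSimplex ℝ (Fin n) := by
  rw [strat]; exact fixpt_mem hn _

lemma strat_eq {n : ℕ} (η : ℝ) (t : ℕ) (g : ℕ → Fin n → ℝ) :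
    strat n η t g = fixpt n (fun φ =>
      Real.exp (-η * ∑ u ∈ Finset.range t, ∑ i, strat n η u g i * g u (φ i)) /
      ∑ φ' : Fin n → Fin n,
        Real.exp (-η * ∑ u ∈ Finset.range t, ∑ i, strat n η u g i * g u (φ' i))) := by
  rw [strat]
  have h : ∀ φ : Fin n → Fin n, (∑ u : Fin t, ∑ i, strat n η u.1 g i * g u.1 (φ i))
      = ∑ u ∈ Finset.range t, ∑ i, strat n η u g i * g u (φ i) :=
    fun φ => Fin.sum_univ_eq_sum_range (fun u => ∑ i, strat n η u g i * g u (φ i)) t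
  simp only [h]
lemma collapse_sum {n : ℕ} (gvec : Fin n → ℝ) (a : Fin n) (cst : ℝ) :
    ∑ j, cst * (if a = j then (1:ℝ) else 0) * gvec j = cst * gvec a := by
  classical
  have : ∀ j, cst * (if a = j then (1:ℝ) else 0) * gvec j
      = if a = j then cst * gvec j else 0 := by
    intro j; split <;> simp
  rw [Finset.sum_congr rfl fun j _ => this j, Finset.sum_ite_eq]
  simp

lemma fix_identity {n : ℕ} (w : (Fin n → Fin n) → ℝ) (p : Fin n → ℝ) (gvec : Fin n → ℝ)
    (hfix : ∀ j, ∑ i, p i * qmat w i j = p j) :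
    ∑ φ, w φ * (∑ i, p i * gvec (φ i)) = ∑ i, p i * gvec i := by
  classical
  have step1 : ∑ φ, w φ * (∑ i, p i * gvec (φ i))
      = ∑ φ : Fin n → Fin n, ∑ i, ∑ j, (p i * (w φ * (if φ i = j then 1 else 0))) * gvec j := by
    refine Finset.sum_congr rfl fun φ _ => ?_
    rw [Finset.mul_sum]
    refine Finset.sum_congr rfl fun i _ => ?_
    have := collapse_sum gvec (φ i) (p i * w φ)
    rw [show ∑ j, p i * (w φ * (if φ i = j then (1:ℝ) else 0)) * gvec j
        = ∑ j, (p i * w φ) * (if φ i = j then (1:ℝ) else 0) * gvec j from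
      Finset.sum_congr rfl fun j _ => by ring]
    rw [this]; ring
  rw [step1, Finset.sum_comm]
  have step2 : ∀ i, ∑ φ : Fin n → Fin n, ∑ j, (p i * (w φ * (if φ i = j then (1:ℝ) else 0))) * gvec j
      = ∑ j, (p i * qmat w i j) * gvec j := by
    intro i
    rw [Finset.sum_comm]
    refine Finset.sum_congr rfl fun j _ => ?_
    rw [qmat, Finset.mul_sum, Finset.sum_mul]
  rw [Finset.sum_congr rfl fun i _ => step2 i, Finset.sum_comm]
  refine Finset.sum_congr rfl fun j _ => ?_
  rw [show ∑ i, (p i * qmat w i j) * gvec j = (∑ i, p i * qmat w i j) * gvec j from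
    (Finset.sum_mul ..).symm, hfix j]

lemma qmat_nonneg {n : ℕ} (w : (Fin n → Fin n) → ℝ) (hw0 : ∀ φ, 0 ≤ w φ) :
    ∀ i j, 0 ≤ qmat w i j := by
  intro i j
  refine Finset.sum_nonneg fun φ _ => mul_nonneg (hw0 φ) ?_
  split <;> norm_num

lemma qmat_rowsum {n : ℕ} (w : (Fin n → Fin n) → ℝ) (hw1 : ∑ φ, w φ = 1) :
    ∀ i, ∑ j, qmat w i j = 1 := by
  classical
  intro i
  unfold qmat
  rw [Finset.sum_comm]
  have key : ∀ φ : Fin n → Fin n, ∑ j, w φ * (if φ i = j then (1:ℝ) else 0) = w φ := by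
    intro φ
    rw [← Finset.mul_sum]
    have h2 : ∑ j, (if φ i = j then (1:ℝ) else 0) = 1 := by
      rw [Finset.sum_ite_eq]; simp
    rw [h2, mul_one]
  rw [Finset.sum_congr rfl fun φ _ => key φ, hw1]

lemma fixpt_spec {n : ℕ} (hn : 0 < n) (w : (Fin n → Fin n) → ℝ)
    (hw0 : ∀ φ, 0 ≤ w φ) (hw1 : ∑ φ, w φ = 1) :
    ∀ j, ∑ i, fixpt n w i * qmat w i j = fixpt n w j := by
  classical
  have hex : ∃ p, p ∈ stdSimplex ℝ (Fin n) ∧ ∀ j, ∑ i, p i * qmat w i j = p j := by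
    obtain ⟨p, hp, hfix⟩ := exists_stationary hn (qmat w) (qmat_nonneg w hw0) (qmat_rowsum w hw1)
    exact ⟨p, hp, hfix⟩
  unfold fixpt
  rw [dif_pos hex]
  exact hex.choose_spec.2

set_option maxHeartbeats 1000000 in
lemma strat_congr {n : ℕ} (η : ℝ) : ∀ (t : ℕ) (g g' : ℕ → Fin n → ℝ),
    (∀ u < t, g u = g' u) → strat n η t g = strat n η t g' := by
  intro t
  induction t using Nat.strong_induction_on with
  | _ t ih =>
    intro g g' hgg
    rw [strat, strat]
    refine congrArg (fixpt n) (funext fun φ => ?_)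
    have hsum : ∀ ψ : Fin n → Fin n, (∑ u : Fin t, ∑ i, strat n η u.1 g i * g u.1 (ψ i))
        = ∑ u : Fin t, ∑ i, strat n η u.1 g' i * g' u.1 (ψ i) := by
      intro ψ
      refine Finset.sum_congr rfl fun u _ => ?_
      rw [ih u.1 u.2 g g' (fun v hv => hgg v (hv.trans u.2)), hgg u.1 u.2]
    rw [hsum φ]
    congr 1
    refine Finset.sum_congr rfl fun φ' _ => ?_
    rw [hsum φ']

lemma swap_regret_net {n : ℕ} (hn : 0 < n) {η : ℝ} (hη : 0 < η) (T : ℕ)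
    (g : ℕ → Fin n → ℝ) (hg : ∀ t < T, ∀ i, 0 ≤ g t i ∧ g t i ≤ 1) (ψ : Fin n → Fin n) :
    ∑ t ∈ Finset.range T, ∑ i, strat n η t g i * (g t i - g t (ψ i))
      ≤ η * T + (↑n * Real.log n) / η := by
  classical
  haveI : Nonempty (Fin n) := ⟨⟨0, hn⟩⟩
  set p : ℕ → Fin n → ℝ := fun t => strat n η t g with hp
  set c : ℕ → (Fin n → Fin n) → ℝ := fun u φ => ∑ i, p u i * g u (φ i) with hc
  have hpmem : ∀ t, p t ∈ stdSimplex ℝ (Fin n) := fun t => strat_mem hn η t g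
  have hcbound : ∀ t < T, ∀ φ, 0 ≤ c t φ ∧ c t φ ≤ 1 := by
    intro t ht φ
    constructor
    · exact Finset.sum_nonneg fun i _ => mul_nonneg ((hpmem t).1 i) (hg t ht (φ i)).1
    · calc ∑ i, p t i * g t (φ i) ≤ ∑ i, p t i * 1 :=
          Finset.sum_le_sum fun i _ =>
            mul_le_mul_of_nonneg_left (hg t ht (φ i)).2 ((hpmem t).1 i)
        _ = 1 := by simp [(hpmem t).2]
  -- weights at time t
  have hZpos : ∀ t, 0 < ∑ φ' : Fin n → Fin n, Real.exp (-η * ∑ u ∈ Finset.range t, c u φ') :=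
    fun t => Finset.sum_pos (fun φ _ => Real.exp_pos _) Finset.univ_nonempty
  have hw0 : ∀ t (φ : Fin n → Fin n),
      0 ≤ Real.exp (-η * ∑ u ∈ Finset.range t, c u φ) /
        ∑ φ', Real.exp (-η * ∑ u ∈ Finset.range t, c u φ') :=
    fun t φ => div_nonneg (Real.exp_pos _).le (hZpos t).le
  have hw1 : ∀ t, ∑ φ : Fin n → Fin n, Real.exp (-η * ∑ u ∈ Finset.range t, c u φ) /
      (∑ φ', Real.exp (-η * ∑ u ∈ Finset.range t, c u φ')) = 1 := by
    intro t
    rw [← Finset.sum_div]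
    exact div_self (hZpos t).ne'
  have hpt : ∀ t, p t = fixpt n (fun φ =>
      Real.exp (-η * ∑ u ∈ Finset.range t, c u φ) /
      ∑ φ', Real.exp (-η * ∑ u ∈ Finset.range t, c u φ')) := by
    intro t
    rw [hp]
    exact strat_eq η t g
  have hfix : ∀ t j, ∑ i, p t i * qmat (fun φ =>
      Real.exp (-η * ∑ u ∈ Finset.range t, c u φ) /
      ∑ φ', Real.exp (-η * ∑ u ∈ Finset.range t, c u φ')) i j = p t j := by
    intro t j
    rw [hpt t]
    exact fixpt_spec hn _ (hw0 t) (hw1 t) j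
  have hid : ∀ t, ∑ φ : Fin n → Fin n,
      (Real.exp (-η * ∑ u ∈ Finset.range t, c u φ) /
        ∑ φ', Real.exp (-η * ∑ u ∈ Finset.range t, c u φ')) * c t φ
      = ∑ i, p t i * g t i := by
    intro t
    have := fix_identity (fun φ =>
      Real.exp (-η * ∑ u ∈ Finset.range t, c u φ) /
      ∑ φ', Real.exp (-η * ∑ u ∈ Finset.range t, c u φ')) (p t) (g t) (hfix t)
    exact this
  have hedge := hedge_bound (Φ := Fin n → Fin n) hη c T hcbound ψ
  have hLHS : ∑ t ∈ Finset.range T, ∑ i, strat n η t g i * (g t i - g t (ψ i))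
      = (∑ t ∈ Finset.range T, ∑ i, p t i * g t i) - ∑ t ∈ Finset.range T, c t ψ := by
    rw [← Finset.sum_sub_distrib]
    refine Finset.sum_congr rfl fun t _ => ?_
    rw [hc]
    rw [← Finset.sum_sub_distrib]
    refine Finset.sum_congr rfl fun i _ => ?_
    have : p t i = strat n η t g i := rfl
    rw [this]; ring
  rw [hLHS]
  have hsum : ∑ t ∈ Finset.range T, ∑ i, p t i * g t i
      = ∑ t ∈ Finset.range T, ∑ φ : Fin n → Fin n,
        (Real.exp (-η * ∑ u ∈ Finset.range t, c u φ) /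
          ∑ φ', Real.exp (-η * ∑ u ∈ Finset.range t, c u φ')) * c t φ :=
    (Finset.sum_congr rfl fun t _ => (hid t).symm)
  rw [hsum]
  have hcard : Real.log (Fintype.card (Fin n → Fin n)) = n * Real.log n := by
    rw [Fintype.card_fun]
    simp only [Fintype.card_fin]
    push_cast
    rw [Real.log_pow]
  rw [hcard] at hedge
  linarith

lemma coord_le_norm {d : ℕ} (z : EuclideanSpace ℝ (Fin d)) (i : Fin d) : |z i| ≤ ‖z‖ := by
  have h : |z i| = Real.sqrt (‖z i‖^2) := by
    rw [Real.norm_eq_abs, Real.sqrt_sq_eq_abs, abs_abs]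
  rw [h, EuclideanSpace.norm_eq]
  exact Real.sqrt_le_sqrt (Finset.single_le_sum (f := fun j => ‖z j‖^2)
    (fun j _ => sq_nonneg _) (Finset.mem_univ i))

lemma exists_net (d : ℕ) (hd : 1 ≤ d) (K : Set (EuclideanSpace ℝ (Fin d))) (hK : K.Nonempty)
    (hdiam : ∀ x ∈ K, ∀ y ∈ K, ‖x - y‖ ≤ 1) {ε : ℝ} (hε0 : 0 < ε) (hε1 : ε ≤ 1) :
    ∃ F : Finset (EuclideanSpace ℝ (Fin d)), F.Nonempty ∧ ↑F ⊆ K ∧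
      (F.card : ℝ) ≤ (5 * Real.sqrt d / ε)^d ∧ ∀ x ∈ K, ∃ y ∈ F, ‖x - y‖ ≤ ε := by
  classical
  have hsd : (1:ℝ) ≤ Real.sqrt d := by
    rw [show (1:ℝ) = Real.sqrt 1 by simp]
    apply Real.sqrt_le_sqrt
    exact_mod_cast hd
  have hsd0 : (0:ℝ) < Real.sqrt d := lt_of_lt_of_le one_pos hsd
  set δ : ℝ := ε / Real.sqrt d with hδ
  have hδ0 : 0 < δ := div_pos hε0 hsd0
  have hδ1 : δ ≤ 1 := by
    rw [hδ, div_le_one hsd0]; exact hε1.trans hsd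
  set G : EuclideanSpace ℝ (Fin d) → (Fin d → ℤ) := fun x i => ⌊x i / δ⌋ with hG
  -- points with same cell are ε-close
  have hclose : ∀ x y : EuclideanSpace ℝ (Fin d), G x = G y → ‖x - y‖ ≤ ε := by
    intro x y hxy
    have hcoord : ∀ i, |x i - y i| ≤ δ := by
      intro i
      have h1 : ⌊x i / δ⌋ = ⌊y i / δ⌋ := congrFun hxy i
      have h2 : |x i / δ - y i / δ| < 1 := by
        have ha := Int.floor_le (x i / δ)
        have hb := Int.lt_floor_add_one (x i / δ)
        have hc := Int.floor_le (y i / δ)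
        have hd' := Int.lt_floor_add_one (y i / δ)
        rw [h1] at ha hb
        rw [abs_lt]; constructor <;> linarith
      have h3 : |x i - y i| = |x i / δ - y i / δ| * δ := by
        rw [div_sub_div_same, abs_div, abs_of_pos hδ0, div_mul_cancel₀]
        exact hδ0.ne'
      rw [h3]
      calc |x i / δ - y i / δ| * δ ≤ 1 * δ :=
        mul_le_mul_of_nonneg_right h2.le hδ0.le
      _ = δ := one_mul _
    rw [EuclideanSpace.norm_eq]
    have hsum : ∑ i, ‖(x - y) i‖^2 ≤ (d : ℝ) * δ^2 := by
      calc ∑ i, ‖(x - y) i‖^2 ≤ ∑ _i : Fin d, δ^2 := by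
            refine Finset.sum_le_sum fun i _ => ?_
            have : ‖(x - y) i‖ = |x i - y i| := by
              simp [PiLp.sub_apply, Real.norm_eq_abs]
            rw [this]
            have := hcoord i
            nlinarith [abs_nonneg (x i - y i)]
        _ = (d : ℝ) * δ^2 := by
              rw [Finset.sum_const, Finset.card_univ, Fintype.card_fin, nsmul_eq_mul]
    calc Real.sqrt (∑ i, ‖(x - y) i‖^2) ≤ Real.sqrt ((d:ℝ) * δ^2) := Real.sqrt_le_sqrt hsum
      _ = Real.sqrt d * δ := by
          rw [Real.sqrt_mul (by positivity), Real.sqrt_sq hδ0.le]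
      _ = ε := by rw [hδ]; field_simp
  obtain ⟨x₀, hx₀⟩ := hK
  set lo : Fin d → ℤ := fun i => ⌊(x₀ i - 1) / δ⌋ with hlo
  set hi : Fin d → ℤ := fun i => ⌊(x₀ i + 1) / δ⌋ with hhi
  have hrange : ∀ x ∈ K, ∀ i, G x i ∈ Finset.Icc (lo i) (hi i) := by
    intro x hx i
    have h1 : |x i - x₀ i| ≤ 1 := by
      have := coord_le_norm (x - x₀) i
      have h2 : (x - x₀) i = x i - x₀ i := by simp [PiLp.sub_apply]
      rw [h2] at this
      exact this.trans (hdiam x hx x₀ hx₀)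
    rw [abs_le] at h1
    rw [Finset.mem_Icc]
    constructor
    · exact Int.floor_mono ((div_le_div_iff_of_pos_right hδ0).2 (by linarith))
    · exact Int.floor_mono ((div_le_div_iff_of_pos_right hδ0).2 (by linarith))
  set B : Finset (Fin d → ℤ) := Fintype.piFinset fun i => Finset.Icc (lo i) (hi i) with hB
  have hGB : ∀ x ∈ K, G x ∈ B := by
    intro x hx
    rw [hB, Fintype.mem_piFinset]
    exact hrange x hx
  set rep : (Fin d → ℤ) → EuclideanSpace ℝ (Fin d) := fun z =>
    if h : ∃ x, x ∈ K ∧ G x = z then h.choose else x₀ with hrep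
  have hrepK : ∀ z, rep z ∈ K := by
    intro z
    simp only [hrep]
    split
    · next h => exact h.choose_spec.1
    · exact hx₀
  refine ⟨B.image rep, ?_, ?_, ?_, ?_⟩
  · exact ⟨rep (G x₀), Finset.mem_image_of_mem rep (hGB x₀ hx₀)⟩
  · intro y hy
    simp only [Finset.coe_image, Set.mem_image] at hy
    obtain ⟨z, _, rfl⟩ := hy
    exact hrepK z
  · calc ((B.image rep).card : ℝ) ≤ (B.card : ℝ) := by exact_mod_cast Finset.card_image_le
      _ ≤ (5 * Real.sqrt d / ε)^d := by
        rw [hB, Fintype.card_piFinset]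
        push_cast
        have hfac : ∀ i : Fin d, (((Finset.Icc (lo i) (hi i)).card : ℕ) : ℝ)
            ≤ 5 * Real.sqrt d / ε := by
          intro i
          rw [Int.card_Icc]
          rcases le_or_gt (hi i + 1 - lo i) 0 with hneg | hpos
          · rw [Int.toNat_of_nonpos hneg]
            simp only [Nat.cast_zero]
            positivity
          · have hcast : (((hi i + 1 - lo i).toNat : ℕ) : ℝ) = ((hi i : ℝ) + 1 - lo i) := by
              rw [← Int.cast_natCast, Int.toNat_of_nonneg hpos.le]
              push_cast; ring
            rw [hcast]
            have h1 : (hi i : ℝ) ≤ (x₀ i + 1) / δ := Int.floor_le _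
            have h2 : (x₀ i - 1) / δ - 1 < (lo i : ℝ) := by
              have := Int.lt_floor_add_one ((x₀ i - 1) / δ)
              linarith
            have h3 : (x₀ i + 1) / δ - (x₀ i - 1) / δ = 2 / δ := by
              rw [div_sub_div_same]; ring_nf
            have h4 : (hi i : ℝ) + 1 - lo i ≤ 2 / δ + 2 := by linarith
            have h5 : (2:ℝ) ≤ 2 / δ := by
              rw [le_div_iff₀ hδ0]; linarith
            have h6 : 2 / δ + 2 ≤ 4 / δ := by
              have : (4:ℝ) / δ = 2/δ + 2/δ := by ring
              linarith
            have h7 : (4:ℝ) / δ ≤ 5 * Real.sqrt d / ε := by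
              rw [hδ]
              rw [div_div_eq_mul_div, div_le_div_iff₀ hε0 hε0]
              nlinarith
            linarith
        calc ∏ i : Fin d, (((Finset.Icc (lo i) (hi i)).card : ℕ) : ℝ)
            ≤ ∏ _i : Fin d, (5 * Real.sqrt d / ε) := by
              refine Finset.prod_le_prod (fun i _ => by positivity) (fun i _ => hfac i)
          _ = (5 * Real.sqrt d / ε)^d := by
              rw [Finset.prod_const, Finset.card_univ, Fintype.card_fin]
  · intro x hx
    have hz : ∃ x', x' ∈ K ∧ G x' = G x := ⟨x, hx, rfl⟩
    refine ⟨rep (G x), Finset.mem_image_of_mem rep (hGB x hx), ?_⟩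
    have hGrep : G (rep (G x)) = G x := by
      simp only [hrep]
      rw [dif_pos hz]
      exact hz.choose_spec.2
    have := hclose (rep (G x)) x (by rw [hGrep])
    rw [show x - rep (G x) = -(rep (G x) - x) by abel, norm_neg]
    exact this

open scoped Classical in
noncomputable def packF {E : Type*} (F : Finset E) (p : Fin F.card → ℝ) : E →₀ ℝ :=
  Finsupp.onFinset F (fun x => if hx : x ∈ F then p (F.equivFin ⟨x, hx⟩) else 0)
    (fun a ha => by by_contra h; exact ha (dif_neg h))

lemma packF_apply_mem {E : Type*} (F : Finset E) (p : Fin F.card → ℝ) {x : E} (hx : x ∈ F) :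
    packF F p x = p (F.equivFin ⟨x, hx⟩) := by
  classical
  simp only [packF, Finsupp.onFinset_apply]
  rw [dif_pos hx]

lemma packF_nonneg {E : Type*} (F : Finset E) (p : Fin F.card → ℝ) (hp : ∀ i, 0 ≤ p i) :
    ∀ x, 0 ≤ packF F p x := by
  classical
  intro x
  simp only [packF, Finsupp.onFinset_apply]
  split
  · exact hp _
  · exact le_refl 0

lemma packF_support {E : Type*} (F : Finset E) (p : Fin F.card → ℝ) :
    (packF F p).support ⊆ F := Finsupp.support_onFinset_subset

lemma packF_sum_eq {E : Type*} (F : Finset E) (p : Fin F.card → ℝ) (v : E → ℝ) :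
    (packF F p).sum (fun x a => a * v x) = ∑ i, p i * v ((F.equivFin.symm i : E)) := by
  classical
  rw [Finsupp.sum_of_support_subset (packF F p) (packF_support F p) (fun x a => a * v x)
    (fun x _ => zero_mul _)]
  refine Finset.sum_bij (fun x hx => F.equivFin ⟨x, hx⟩) (fun a ha => Finset.mem_univ _)
    ?_ ?_ ?_
  · intro a ha b hb hab
    exact congrArg Subtype.val (F.equivFin.injective hab)
  · intro j _
    refine ⟨(F.equivFin.symm j : E), (F.equivFin.symm j).2, ?_⟩
    exact F.equivFin.apply_symm_apply j
  · intro x hx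
    rw [packF_apply_mem F p hx]
    congr 1
    rw [Equiv.symm_apply_apply]

lemma packF_total {E : Type*} (F : Finset E) (p : Fin F.card → ℝ) :
    (packF F p).sum (fun _ a => a) = ∑ i, p i := by
  classical
  rw [Finsupp.sum_of_support_subset (packF F p) (packF_support F p) (fun _ a => a)
    (fun x _ => rfl)]
  refine Finset.sum_bij (fun x hx => F.equivFin ⟨x, hx⟩) (fun a ha => Finset.mem_univ _)
    ?_ ?_ ?_
  · intro a ha b hb hab
    exact congrArg Subtype.val (F.equivFin.injective hab)
  · intro j _
    refine ⟨(F.equivFin.symm j : E), (F.equivFin.symm j).2, ?_⟩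
    exact F.equivFin.apply_symm_apply j
  · intro x hx
    exact packF_apply_mem F p hx

noncomputable def Cd (d : ℕ) : ℝ :=
  4 * Real.sqrt ((5 * Real.sqrt d)^d * (((d : ℝ) * Real.log (5 * Real.sqrt d) + 1) / Real.log 2 + 1))
    / Real.sqrt (Real.log 2) + 1 / Real.log 2

lemma Cd_pos (d : ℕ) : 0 < Cd d := by
  have h2 : (0:ℝ) < Real.log 2 := Real.log_pos (by norm_num)
  have h3 : (0:ℝ) < 1 / Real.log 2 := by positivity
  have h4 : (0:ℝ) ≤ 4 * Real.sqrt ((5 * Real.sqrt d)^d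
      * (((d : ℝ) * Real.log (5 * Real.sqrt d) + 1) / Real.log 2 + 1))
      / Real.sqrt (Real.log 2) := by positivity
  unfold Cd; linarith

set_option maxHeartbeats 2000000 in
lemma numeric_bound (d : ℕ) (hd : 1 ≤ d) (T n : ℕ) (hT : 1 ≤ T) (hn : 1 ≤ n)
    (hcard : (n : ℝ) ≤ (5 * Real.sqrt d / ((T:ℝ) ^ (-(1:ℝ)/(d+2))))^d) :
    2 * (Real.sqrt (((n : ℝ) * Real.log n + 1) / T) * T
        + ((n : ℝ) * Real.log n) / Real.sqrt (((n : ℝ) * Real.log n + 1) / T))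
      + ((T:ℝ) ^ (-(1:ℝ)/(d+2))) * T
      ≤ Cd d * (T : ℝ) ^ ((d + 1 : ℝ)/(d + 2)) * Real.log (T + 1) := by
  have hT0 : (0:ℝ) < T := by exact_mod_cast hT.trans_lt' (by norm_num)
  have hT1 : (1:ℝ) ≤ T := by exact_mod_cast hT
  have hd2 : ((d:ℝ) + 2) ≠ 0 := by positivity
  have hn0 : (0:ℝ) < n := by exact_mod_cast hn.trans_lt' (by norm_num)
  have hlogn : 0 ≤ Real.log n := Real.log_nonneg (by exact_mod_cast hn)
  have hsd : (1:ℝ) ≤ Real.sqrt d := by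
    rw [show (1:ℝ) = Real.sqrt 1 by simp]
    apply Real.sqrt_le_sqrt; exact_mod_cast hd
  have h5sd : (1:ℝ) ≤ 5 * Real.sqrt d := by linarith
  have hlog2 : (0:ℝ) < Real.log 2 := Real.log_pos (by norm_num)
  have hlogT1 : Real.log 2 ≤ Real.log (T + 1) := Real.log_le_log (by norm_num) (by linarith)
  have hlogT1' : 0 < Real.log ((T:ℝ) + 1) := lt_of_lt_of_le hlog2 hlogT1
  set Q : ℝ := (n : ℝ) * Real.log n + 1 with hQdef
  have hQ1 : 1 ≤ Q := by
    have : 0 ≤ (n:ℝ) * Real.log n := mul_nonneg hn0.le hlogn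
    rw [hQdef]; linarith
  have hQ0 : 0 < Q := lt_of_lt_of_le one_pos hQ1
  set η : ℝ := Real.sqrt (Q / T) with hηdef
  have hη0 : 0 < η := Real.sqrt_pos.2 (div_pos hQ0 hT0)
  have hηeq : η = Real.sqrt Q / Real.sqrt T := by rw [hηdef, Real.sqrt_div hQ0.le]
  have hsT : 0 < Real.sqrt T := Real.sqrt_pos.2 hT0
  have hsQ : 0 < Real.sqrt Q := Real.sqrt_pos.2 hQ0
  -- Step A
  have hA1 : η * T = Real.sqrt Q * Real.sqrt T := by
    rw [hηeq]
    rw [div_mul_eq_mul_div, mul_div_assoc, Real.div_sqrt]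
  have hA2 : (n : ℝ) * Real.log n / η ≤ Real.sqrt Q * Real.sqrt T := by
    rw [hηeq, div_div_eq_mul_div]
    have hle : (n:ℝ) * Real.log n ≤ Q := by rw [hQdef]; linarith
    calc (n:ℝ) * Real.log n * Real.sqrt T / Real.sqrt Q
        ≤ Q * Real.sqrt T / Real.sqrt Q :=
          (div_le_div_iff_of_pos_right hsQ).2 (mul_le_mul_of_nonneg_right hle hsT.le)
      _ = Real.sqrt Q * Real.sqrt T := by
          rw [mul_comm Q, mul_div_assoc, Real.div_sqrt, mul_comm]
  -- Step B : n ≤ M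
  have hpow : (5 * Real.sqrt d / ((T:ℝ) ^ (-(1:ℝ)/(d+2))))^d
      = (5 * Real.sqrt d)^d * (T:ℝ) ^ ((d:ℝ)/(d+2)) := by
    rw [div_pow, ← Real.rpow_natCast ((T:ℝ) ^ (-(1:ℝ)/((d:ℝ)+2))) d, ← Real.rpow_mul hT0.le]
    rw [show (-(1:ℝ)/((d:ℝ)+2)) * ((d:ℕ):ℝ) = -((d:ℝ)/((d:ℝ)+2)) by push_cast; ring]
    rw [Real.rpow_neg hT0.le, div_eq_mul_inv, inv_inv]
  have hnM' : (n:ℝ) ≤ (5 * Real.sqrt d)^d * (T:ℝ) ^ ((d:ℝ)/(d+2)) := by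
    rw [← hpow]; exact hcard
  set M : ℝ := (5 * Real.sqrt d)^d * (T:ℝ) ^ ((d:ℝ)/(d+2)) with hM
  have hnM : (n:ℝ) ≤ M := hnM'
  have hpowpos : (0:ℝ) < (5 * Real.sqrt d)^d := by positivity
  have hrpos : (0:ℝ) < (T:ℝ) ^ ((d:ℝ)/(d+2)) := Real.rpow_pos_of_pos hT0 _
  have hr1 : (1:ℝ) ≤ (T:ℝ) ^ ((d:ℝ)/(d+2)) := by
    rw [show (1:ℝ) = (T:ℝ) ^ (0:ℝ) by rw [Real.rpow_zero]]
    exact Real.rpow_le_rpow_of_exponent_le hT1 (by positivity)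
  have hM1 : 1 ≤ M := by
    rw [hM]
    calc (1:ℝ) = 1 * 1 := by norm_num
      _ ≤ (5 * Real.sqrt d)^d * (T:ℝ) ^ ((d:ℝ)/(d+2)) :=
        mul_le_mul (one_le_pow₀ h5sd) hr1 zero_le_one (by positivity)
  have hM0 : (0:ℝ) < M := lt_of_lt_of_le one_pos hM1
  -- Step D
  have hD : Q ≤ M * (Real.log M + 1) := by
    have h1 : Real.log n ≤ Real.log M := Real.log_le_log hn0 hnM
    have h2 : (n:ℝ) * Real.log n ≤ M * Real.log M :=
      (mul_le_mul_of_nonneg_right hnM hlogn).trans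
        (mul_le_mul_of_nonneg_left h1 hM0.le)
    rw [hQdef]
    nlinarith
  -- Step E
  set b : ℝ := ((d : ℝ) * Real.log (5 * Real.sqrt d) + 1) / Real.log 2 + 1 with hb
  have hlog5sd : 0 ≤ Real.log (5 * Real.sqrt d) := Real.log_nonneg h5sd
  have hlogM : Real.log M = (d:ℝ) * Real.log (5 * Real.sqrt d)
      + ((d:ℝ)/((d:ℝ)+2)) * Real.log T := by
    rw [hM, Real.log_mul hpowpos.ne' hrpos.ne', Real.log_pow, Real.log_rpow hT0]
  have hE : Real.log M + 1 ≤ b * Real.log ((T:ℝ) + 1) := by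
    have hlogT0 : 0 ≤ Real.log T := Real.log_nonneg hT1
    have hlogTT1 : Real.log (T:ℝ) ≤ Real.log ((T:ℝ) + 1) := Real.log_le_log hT0 (by linarith)
    have h1 : ((d:ℝ)/((d:ℝ)+2)) * Real.log T ≤ Real.log ((T:ℝ)+1) := by
      have hfrac : ((d:ℝ)/((d:ℝ)+2)) ≤ 1 := by
        rw [div_le_one (by positivity)]; linarith
      calc ((d:ℝ)/((d:ℝ)+2)) * Real.log T ≤ 1 * Real.log T :=
            mul_le_mul_of_nonneg_right hfrac hlogT0
        _ = Real.log T := one_mul _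
        _ ≤ Real.log ((T:ℝ)+1) := hlogTT1
    have ha0 : 0 ≤ (d : ℝ) * Real.log (5 * Real.sqrt d) + 1 := by positivity
    have h2 : (d : ℝ) * Real.log (5 * Real.sqrt d) + 1
        ≤ (((d : ℝ) * Real.log (5 * Real.sqrt d) + 1) / Real.log 2) * Real.log ((T:ℝ)+1) := by
      calc (d : ℝ) * Real.log (5 * Real.sqrt d) + 1
          = (((d : ℝ) * Real.log (5 * Real.sqrt d) + 1) / Real.log 2) * Real.log 2 := by
            field_simp
        _ ≤ (((d : ℝ) * Real.log (5 * Real.sqrt d) + 1) / Real.log 2) * Real.log ((T:ℝ)+1) :=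
            mul_le_mul_of_nonneg_left hlogT1 (by positivity)
    rw [hlogM, hb]
    have hexp : (b:ℝ) = ((d : ℝ) * Real.log (5 * Real.sqrt d) + 1) / Real.log 2 + 1 := hb
    nlinarith [h1, h2]
  -- Step F
  set RT : ℝ := (T : ℝ) ^ ((d + 1 : ℝ)/(d + 2)) with hRT
  have hRT0 : 0 < RT := Real.rpow_pos_of_pos hT0 _
  have hQMb : Q ≤ M * (b * Real.log ((T:ℝ)+1)) :=
    hD.trans (mul_le_mul_of_nonneg_left hE hM0.le)
  have hTT : (T:ℝ) ^ ((d:ℝ)/((d:ℝ)+2)) * T = RT^2 := by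
    have h1 : (T:ℝ) ^ ((d:ℝ)/((d:ℝ)+2)) * T = (T:ℝ) ^ ((d:ℝ)/((d:ℝ)+2) + 1) := by
      rw [Real.rpow_add hT0, Real.rpow_one]
    have h2 : ((d:ℝ)/((d:ℝ)+2) + 1) = ((d + 1 : ℝ)/(d + 2)) + ((d + 1 : ℝ)/(d + 2)) := by
      field_simp
      ring
    rw [h1, h2, Real.rpow_add hT0, hRT, sq]
  have hsqrtQT : Real.sqrt Q * Real.sqrt T
      ≤ Real.sqrt ((5 * Real.sqrt d)^d * b) * RT * Real.sqrt (Real.log ((T:ℝ)+1)) := by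
    rw [← Real.sqrt_mul hQ0.le]
    have hb0 : 0 < b := by
      rw [hb]; positivity
    have hQT : Q * T ≤ ((5 * Real.sqrt d)^d * b) * RT^2 * Real.log ((T:ℝ)+1) := by
      calc Q * T ≤ (M * (b * Real.log ((T:ℝ)+1))) * T :=
            mul_le_mul_of_nonneg_right hQMb hT0.le
        _ = ((5 * Real.sqrt d)^d * b) * ((T:ℝ) ^ ((d:ℝ)/((d:ℝ)+2)) * T) * Real.log ((T:ℝ)+1) := by
            rw [hM]; ring
        _ = ((5 * Real.sqrt d)^d * b) * RT^2 * Real.log ((T:ℝ)+1) := by rw [hTT]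
    calc Real.sqrt (Q * T) ≤ Real.sqrt (((5 * Real.sqrt d)^d * b) * RT^2 * Real.log ((T:ℝ)+1)) :=
          Real.sqrt_le_sqrt hQT
      _ = Real.sqrt ((5 * Real.sqrt d)^d * b) * RT * Real.sqrt (Real.log ((T:ℝ)+1)) := by
          rw [Real.sqrt_mul (by positivity), Real.sqrt_mul (by positivity), Real.sqrt_sq hRT0.le]
  have hsqrtlog : Real.sqrt (Real.log ((T:ℝ)+1)) ≤ Real.log ((T:ℝ)+1) / Real.sqrt (Real.log 2) := by
    rw [le_div_iff₀ (Real.sqrt_pos.2 hlog2)]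
    rw [← Real.sqrt_mul hlogT1'.le]
    calc Real.sqrt (Real.log ((T:ℝ)+1) * Real.log 2)
        ≤ Real.sqrt (Real.log ((T:ℝ)+1) * Real.log ((T:ℝ)+1)) :=
          Real.sqrt_le_sqrt (mul_le_mul_of_nonneg_left hlogT1 hlogT1'.le)
      _ = Real.log ((T:ℝ)+1) := by
          rw [← sq, Real.sqrt_sq hlogT1'.le]
  -- Step G
  have hG : ((T:ℝ) ^ (-(1:ℝ)/((d:ℝ)+2))) * T = RT := by
    have h1 : ((T:ℝ) ^ (-(1:ℝ)/((d:ℝ)+2))) * T = (T:ℝ) ^ (-(1:ℝ)/((d:ℝ)+2) + 1) := by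
      rw [Real.rpow_add hT0, Real.rpow_one]
    have h2 : (-(1:ℝ)/((d:ℝ)+2) + 1) = ((d + 1 : ℝ)/(d + 2)) := by
      field_simp
      ring
    rw [h1, h2, hRT]
  -- Step H : combine
  have hC : Cd d = 4 * Real.sqrt ((5 * Real.sqrt d)^d * b) / Real.sqrt (Real.log 2)
      + 1 / Real.log 2 := by rw [Cd, hb]
  have hmain1 : η * T + (n : ℝ) * Real.log n / η ≤ 2 * (Real.sqrt Q * Real.sqrt T) := by
    rw [hA1]; linarith
  have hsnn : 0 ≤ Real.sqrt ((5 * Real.sqrt d)^d * b) := Real.sqrt_nonneg _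
  have hfin1 : Real.sqrt Q * Real.sqrt T
      ≤ Real.sqrt ((5 * Real.sqrt d)^d * b) * RT * (Real.log ((T:ℝ)+1) / Real.sqrt (Real.log 2)) :=
    hsqrtQT.trans (mul_le_mul_of_nonneg_left hsqrtlog (by positivity))
  have hfin2 : ((T:ℝ) ^ (-(1:ℝ)/((d:ℝ)+2))) * T ≤ RT * (Real.log ((T:ℝ)+1) / Real.log 2) := by
    rw [hG]
    have : (1:ℝ) ≤ Real.log ((T:ℝ)+1) / Real.log 2 := by
      rw [le_div_iff₀ hlog2]; linarith
    nlinarith [hRT0]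
  calc 2 * (η * T + (n : ℝ) * Real.log n / η) + ((T:ℝ) ^ (-(1:ℝ)/((d:ℝ)+2))) * T
      ≤ 2 * (2 * (Real.sqrt Q * Real.sqrt T)) + RT * (Real.log ((T:ℝ)+1) / Real.log 2) := by
        linarith
    _ ≤ 4 * (Real.sqrt ((5 * Real.sqrt d)^d * b) * RT * (Real.log ((T:ℝ)+1) / Real.sqrt (Real.log 2)))
        + RT * (Real.log ((T:ℝ)+1) / Real.log 2) := by linarith
    _ = (4 * Real.sqrt ((5 * Real.sqrt d)^d * b) / Real.sqrt (Real.log 2) + 1 / Real.log 2)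
        * RT * Real.log ((T:ℝ)+1) := by
        field_simp
    _ = Cd d * RT * Real.log ((T:ℝ)+1) := by rw [hC]


set_option maxHeartbeats 2000000 in
/-- **Full swap regret for Lipschitz losses.**
For every `d ≥ 1` there is a constant `C` such that for every convex set
`K ⊆ ℝ^d` of diameter at most 1, every `L > 0` and horizon `T ≥ 1`, there is a
strategy (mapping past losses to a finitely supported distribution on `K`)
whose full swap regret against every sequence of `L`-Lipschitz losses is at
most `C · L · T^{(d+1)/(d+2)} · log(T+1)`. -/
theorem full_swap_regret_lipschitz :
    ∀ d : ℕ, 1 ≤ d → ∃ C : ℝ, 0 < C ∧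
      ∀ K : Set (EuclideanSpace ℝ (Fin d)), K.Nonempty → Convex ℝ K →
        (∀ x ∈ K, ∀ y ∈ K, ‖x - y‖ ≤ 1) →
        ∀ L : ℝ, 0 < L →
        ∀ T : ℕ, 1 ≤ T →
          ∃ A : (t : ℕ) → (Fin t → (EuclideanSpace ℝ (Fin d) → ℝ)) →
              (EuclideanSpace ℝ (Fin d) →₀ ℝ),
            (∀ (t : ℕ) (h : Fin t → (EuclideanSpace ℝ (Fin d) → ℝ)),
              (∀ s, 0 ≤ A t h s) ∧ ((A t h).sum fun _ a => a) = 1 ∧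
                ∀ s ∈ (A t h).support, s ∈ K) ∧
            ∀ ℓ : ℕ → EuclideanSpace ℝ (Fin d) → ℝ,
              (∀ t < T, ∀ x ∈ K, ∀ y ∈ K, |ℓ t x - ℓ t y| ≤ L * ‖x - y‖) →
              ∀ φ : EuclideanSpace ℝ (Fin d) → EuclideanSpace ℝ (Fin d),
                (∀ z ∈ K, φ z ∈ K) →
                ∑ t ∈ Finset.range T,
                    (A t fun u : Fin t => ℓ u.1).sum (fun s a => a * (ℓ t s - ℓ t (φ s))) ≤
                  C * L * (T : ℝ) ^ ((d + 1 : ℝ) / (d + 2)) * Real.log (T + 1) := by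
  classical
  intro d hd
  refine ⟨Cd d, Cd_pos d, ?_⟩
  intro K hKne hKconv hdiam L hL T hT
  have hT0 : (0:ℝ) < T := by exact_mod_cast hT.trans_lt' (by norm_num)
  have hT1 : (1:ℝ) ≤ T := by exact_mod_cast hT
  have hε0 : (0:ℝ) < (T:ℝ) ^ (-(1:ℝ)/(d+2)) := Real.rpow_pos_of_pos hT0 _
  have hε1 : (T:ℝ) ^ (-(1:ℝ)/(d+2)) ≤ 1 := by
    apply Real.rpow_le_one_of_one_le_of_nonpos hT1
    apply div_nonpos_of_nonpos_of_nonneg <;> [norm_num; positivity]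
  obtain ⟨F, hFne, hFK, hFcard, hFnet⟩ := exists_net d hd K hKne hdiam hε0 hε1
  set n := F.card with hndef
  have hn0 : 0 < n := Finset.card_pos.2 hFne
  set s : Fin n → EuclideanSpace ℝ (Fin d) := fun i => (F.equivFin.symm i : _) with hs
  have hsF : ∀ i, s i ∈ F := fun i => (F.equivFin.symm i).2
  have hsK : ∀ i, s i ∈ K := fun i => hFK (hsF i)
  set i0 : Fin n := ⟨0, hn0⟩ with hi0
  have hlogn : 0 ≤ Real.log n := Real.log_nonneg (by exact_mod_cast hn0)
  set η : ℝ := Real.sqrt (((n:ℝ) * Real.log n + 1) / T) with hηdef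
  have hη0 : 0 < η := by
    apply Real.sqrt_pos.2
    apply div_pos _ hT0
    have : 0 ≤ (n:ℝ) * Real.log n := mul_nonneg (by positivity) hlogn
    linarith
  set nrm : (EuclideanSpace ℝ (Fin d) → ℝ) → (Fin n → ℝ) :=
    fun f i => (f (s i) - f (s i0) + L) / (2*L) with hnrm
  refine ⟨fun t h => packF F (strat n η t
    (fun u => if hu : u < t then nrm (h ⟨u, hu⟩) else 0)), ?_, ?_⟩
  · intro t h
    have hmem := strat_mem hn0 η t (fun u => if hu : u < t then nrm (h ⟨u, hu⟩) else 0)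
    refine ⟨packF_nonneg F _ hmem.1, ?_, fun x hx => hFK (packF_support F _ hx)⟩
    rw [packF_total]
    exact hmem.2
  · intro ℓ hlip φ hφ
    set g : ℕ → Fin n → ℝ := fun u => nrm (ℓ u) with hg
    have hpmem : ∀ t, strat n η t g ∈ stdSimplex ℝ (Fin n) := fun t => strat_mem hn0 η t g
    have hcons : ∀ t, strat n η t
        (fun u => if hu : u < t then nrm ((fun u : Fin t => ℓ u.1) ⟨u, hu⟩) else 0)
        = strat n η t g := by
      intro t
      apply strat_congr
      intro u hu
      rw [dif_pos hu]
    have hψex : ∀ i : Fin n, ∃ y ∈ F, ‖φ (s i) - y‖ ≤ (T:ℝ) ^ (-(1:ℝ)/(d+2)) :=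
      fun i => hFnet (φ (s i)) (hφ _ (hsK i))
    set ψ : Fin n → Fin n := fun i => F.equivFin ⟨(hψex i).choose, (hψex i).choose_spec.1⟩
      with hψ
    have hsψ : ∀ i, s (ψ i) = (hψex i).choose := by
      intro i
      simp only [hs, hψ, Equiv.symm_apply_apply]
    have hψclose : ∀ i, ‖φ (s i) - s (ψ i)‖ ≤ (T:ℝ) ^ (-(1:ℝ)/(d+2)) := by
      intro i
      rw [hsψ i]
      exact (hψex i).choose_spec.2
    have hgbound : ∀ t < T, ∀ i, 0 ≤ g t i ∧ g t i ≤ 1 := by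
      intro t ht i
      have h1 : |ℓ t (s i) - ℓ t (s i0)| ≤ L := by
        have h2 := hlip t ht (s i) (hsK i) (s i0) (hsK i0)
        have h3 := hdiam (s i) (hsK i) (s i0) (hsK i0)
        calc |ℓ t (s i) - ℓ t (s i0)| ≤ L * ‖s i - s i0‖ := h2
          _ ≤ L * 1 := mul_le_mul_of_nonneg_left h3 hL.le
          _ = L := mul_one _
      rw [abs_le] at h1
      constructor
      · apply div_nonneg _ (by positivity)
        linarith [h1.1]
      · rw [div_le_one (by positivity)]
        linarith [h1.2]
    have hswap := swap_regret_net hn0 hη0 T g hgbound ψ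
    have hterm : ∀ t < T, ∀ i, ℓ t (s i) - ℓ t (φ (s i))
        ≤ 2*L*(g t i - g t (ψ i)) + L * ((T:ℝ) ^ (-(1:ℝ)/(d+2))) := by
      intro t ht i
      have heq : ℓ t (s i) - ℓ t (s (ψ i)) = 2*L*(g t i - g t (ψ i)) := by
        have hL2 : (2*L) ≠ 0 := by positivity
        simp only [hg, hnrm]
        field_simp
        try ring
      have h2 : ℓ t (s (ψ i)) - ℓ t (φ (s i)) ≤ L * ((T:ℝ) ^ (-(1:ℝ)/(d+2))) := by
        have h3 := hlip t ht (s (ψ i)) (hsK (ψ i)) (φ (s i)) (hφ _ (hsK i))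
        have h4 : ‖s (ψ i) - φ (s i)‖ ≤ (T:ℝ) ^ (-(1:ℝ)/(d+2)) := by
          rw [norm_sub_rev]
          exact hψclose i
        calc ℓ t (s (ψ i)) - ℓ t (φ (s i)) ≤ |ℓ t (s (ψ i)) - ℓ t (φ (s i))| := le_abs_self _
          _ ≤ L * ‖s (ψ i) - φ (s i)‖ := h3
          _ ≤ L * ((T:ℝ) ^ (-(1:ℝ)/(d+2))) := mul_le_mul_of_nonneg_left h4 hL.le
      linarith
    have hsum1 : ∀ t, (packF F (strat n η t
        (fun u => if hu : u < t then nrm ((fun u : Fin t => ℓ u.1) ⟨u, hu⟩) else 0))).sum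
          (fun x a => a * (ℓ t x - ℓ t (φ x)))
        = ∑ i, strat n η t g i * (ℓ t (s i) - ℓ t (φ (s i))) := by
      intro t
      rw [hcons t]
      exact packF_sum_eq F (strat n η t g) (fun x => ℓ t x - ℓ t (φ x))
    calc ∑ t ∈ Finset.range T,
        (packF F (strat n η t
          (fun u => if hu : u < t then nrm ((fun u : Fin t => ℓ u.1) ⟨u, hu⟩) else 0))).sum
          (fun x a => a * (ℓ t x - ℓ t (φ x)))
        = ∑ t ∈ Finset.range T, ∑ i, strat n η t g i * (ℓ t (s i) - ℓ t (φ (s i))) :=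
          Finset.sum_congr rfl fun t _ => hsum1 t
      _ ≤ ∑ t ∈ Finset.range T, ∑ i, strat n η t g i
            * (2*L*(g t i - g t (ψ i)) + L * ((T:ℝ) ^ (-(1:ℝ)/(d+2)))) := by
          refine Finset.sum_le_sum fun t ht => Finset.sum_le_sum fun i _ => ?_
          exact mul_le_mul_of_nonneg_left (hterm t (Finset.mem_range.1 ht) i)
            ((hpmem t).1 i)
      _ = 2*L* (∑ t ∈ Finset.range T, ∑ i, strat n η t g i * (g t i - g t (ψ i)))
            + (L * ((T:ℝ) ^ (-(1:ℝ)/(d+2)))) * T := by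
          have hper : ∀ t, ∑ i, strat n η t g i
              * (2*L*(g t i - g t (ψ i)) + L * ((T:ℝ) ^ (-(1:ℝ)/(d+2))))
              = 2*L*(∑ i, strat n η t g i * (g t i - g t (ψ i)))
                + L * ((T:ℝ) ^ (-(1:ℝ)/(d+2))) := by
            intro t
            rw [Finset.mul_sum]
            have : ∀ i : Fin n, strat n η t g i
                * (2*L*(g t i - g t (ψ i)) + L * ((T:ℝ) ^ (-(1:ℝ)/(d+2))))
                = 2*L*(strat n η t g i * (g t i - g t (ψ i)))
                  + (L * ((T:ℝ) ^ (-(1:ℝ)/(d+2)))) * strat n η t g i := by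
              intro i; ring
            rw [Finset.sum_congr rfl fun i _ => this i, Finset.sum_add_distrib,
              ← Finset.mul_sum, ← Finset.mul_sum, (hpmem t).2, mul_one]
          rw [Finset.sum_congr rfl fun t _ => hper t, Finset.sum_add_distrib,
            ← Finset.mul_sum, Finset.sum_const, Finset.card_range, nsmul_eq_mul]
          ring
      _ ≤ 2*L*(η * T + ((n:ℝ) * Real.log n) / η)
            + (L * ((T:ℝ) ^ (-(1:ℝ)/(d+2)))) * T := by
          have h2L : (0:ℝ) ≤ 2*L := by positivity
          nlinarith [hswap]
      _ = L * (2 * (η * T + ((n:ℝ) * Real.log n) / η) + ((T:ℝ) ^ (-(1:ℝ)/(d+2))) * T) := by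
          ring
      _ ≤ L * (Cd d * (T : ℝ) ^ ((d + 1 : ℝ)/(d + 2)) * Real.log (T + 1)) := by
          apply mul_le_mul_of_nonneg_left _ hL.le
          exact numeric_bound d hd T n hT hn0 hFcard
      _ = Cd d * L * (T : ℝ) ^ ((d + 1 : ℝ)/(d + 2)) * Real.log (T + 1) := by ring
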